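/- In the 2×3 bimatrix game with leader actions {Up, Down}, follower actions {Left, Mid, Right}, leader payoffs U_L(Up,·) = (0,−2,−2), U_L(Down,·) = (0,−2,2), and follower payoffs U_F(·,Up) = (ε,−1,0), U_F(·,Down) = (−1,1,0) for a fixed ε ∈ (0,1): (i) the Stackelberg value of the leader is 0; and (ii) if the follower runs Follow the Leader (in each round playing the action with highest cumulative follower payoff so far, ties broken in favor of Left) and the leader plays Up for the first m rounds and Down for the last m rounds (n = 2m), then the leader's total payoff is at least 2·(1−ε)·m − c for an absolute constant c, so the leader's per-round payoff approaches (1−ε)·1 > 0 as m → ∞, strictly exceeding the Stackelberg value. -/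

import Mathlib

/-- Leader payoffs: rows Up/Down, columns Left/Mid/Right;
`U_L(Up,·) = (0,−2,−2)`, `U_L(Down,·) = (0,−2,2)`. -/
noncomputable def ULgame : Fin 2 → Fin 3 → ℝ := fun a b => !![0, -2, -2; 0, -2, 2] a b

/-- Follower payoffs: rows Left/Mid/Right, columns Up/Down;
`U_F(·,Up) = (ε,−1,0)`, `U_F(·,Down) = (−1,1,0)`. -/
noncomputable def UFgame (ε : ℝ) : Fin 3 → Fin 2 → ℝ := fun b a => !![ε, -1; -1, 1; 0, 0] b a

/-- The leader's manipulation sequence: Up (action `0`) for the first `m` rounds, then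
Down (action `1`) for the last `m` rounds. -/
def leadSeq (m : ℕ) : Fin (2 * m) → Fin 2 := fun i => if i.val < m then 0 else 1

/-- The follower's cumulative payoff of action `b'` against the leader's manipulation
sequence, over the rounds before round `i`. -/
noncomputable def cumFollower (ε : ℝ) (m : ℕ) (i : Fin (2 * m)) (b' : Fin 3) : ℝ :=
  ∑ i' ∈ Finset.univ.filter (fun i' : Fin (2 * m) => i'.val < i.val),
    UFgame ε b' (leadSeq m i')

/-- In the 2×3 game above with `ε ∈ (0,1)`:
(i) the leader's Stackelberg value is `0` (the maximum, over leader mixed strategies `x`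
and follower best responses `b` to `x`, of the leader's expected payoff); and
(ii) against a Follow-the-Leader follower (playing an action with highest cumulative
follower payoff so far, ties broken in favor of Left) the Up-then-Down leader obtains
total payoff at least `2·(1−ε)·m − c` for an absolute constant `c`. -/
lemma cum_eq (ε : ℝ) (m : ℕ) (i : Fin (2 * m)) (b' : Fin 3) :
    cumFollower ε m i b' =
      ((min i.val m : ℕ) : ℝ) * UFgame ε b' 0 + ((i.val - m : ℕ) : ℝ) * UFgame ε b' 1 := by
  have h0 : cumFollower ε m i b' =
      ∑ j ∈ Finset.range (2 * m),
        (if j < i.val then UFgame ε b' (if j < m then (0 : Fin 2) else 1) else 0) := by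
    rw [cumFollower, Finset.sum_filter]
    simp only [leadSeq]
    exact Fin.sum_univ_eq_sum_range
      (fun j => if j < i.val then UFgame ε b' (if j < m then (0 : Fin 2) else 1) else 0) (2 * m)
  rw [h0, ← Finset.sum_filter]
  have h1 : (Finset.range (2 * m)).filter (fun j => j < i.val) = Finset.range i.val := by
    ext j; simp only [Finset.mem_filter, Finset.mem_range]
    have := i.isLt; omega
  rw [h1]
  simp only [apply_ite (UFgame ε b')]
  rw [Finset.sum_ite, Finset.sum_const, Finset.sum_const]
  have h2 : (Finset.range i.val).filter (fun j => j < m) = Finset.range (min i.val m) := by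
    ext j; simp only [Finset.mem_filter, Finset.mem_range]; omega
  have h3 : (Finset.range i.val).filter (fun j => ¬ j < m) = Finset.Ico m i.val := by
    ext j; simp only [Finset.mem_filter, Finset.mem_range, Finset.mem_Ico]; omega
  rw [h2, h3, Finset.card_range, Nat.card_Ico]
  simp [nsmul_eq_mul]

lemma cum0 (ε : ℝ) (m : ℕ) (i : Fin (2 * m)) :
    cumFollower ε m i 0 = ((min i.val m : ℕ) : ℝ) * ε - ((i.val - m : ℕ) : ℝ) := by
  rw [cum_eq]; norm_num [UFgame]; ring

lemma cum1 (ε : ℝ) (m : ℕ) (i : Fin (2 * m)) :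
    cumFollower ε m i 1 = -((min i.val m : ℕ) : ℝ) + ((i.val - m : ℕ) : ℝ) := by
  rw [cum_eq]; norm_num [UFgame]

lemma cum2 (ε : ℝ) (m : ℕ) (i : Fin (2 * m)) : cumFollower ε m i 2 = 0 := by
  rw [cum_eq, show UFgame ε 2 0 = 0 from rfl, show UFgame ε 2 1 = 0 from rfl]; norm_num

lemma fin3_cases (x : Fin 3) : x = 0 ∨ x = 1 ∨ x = 2 := by fin_cases x <;> simp


theorem mean_based_learners_are_manipulable
    (ε : ℝ) (hε : 0 < ε) (hε1 : ε < 1) :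
    IsGreatest
      {v : ℝ | ∃ x : Fin 2 → ℝ, (∀ a, 0 ≤ x a) ∧ (∑ a, x a = 1) ∧
        ∃ b : Fin 3,
          (∀ b' : Fin 3, ∑ a, x a * UFgame ε b' a ≤ ∑ a, x a * UFgame ε b a) ∧
          v = ∑ a, x a * ULgame a b} 0
    ∧ ∃ c : ℝ, ∀ (m : ℕ) (b : Fin (2 * m) → Fin 3),
        (∀ i : Fin (2 * m),
          (∀ b' : Fin 3, cumFollower ε m i b' ≤ cumFollower ε m i (b i)) ∧
          ((∀ b' : Fin 3, cumFollower ε m i b' ≤ cumFollower ε m i 0) → b i = 0)) →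
        ∑ i : Fin (2 * m), ULgame (leadSeq m i) (b i) ≥ 2 * (1 - ε) * m - c := by
  constructor
  · constructor
    · refine ⟨fun a => if a = 0 then 1 else 0, ?_, ?_, 0, ?_, ?_⟩
      · intro a; positivity
      · simp [Fin.sum_univ_two]
      · intro b'; fin_cases b' <;> norm_num [Fin.sum_univ_two, UFgame] <;> linarith
      · norm_num [Fin.sum_univ_two, ULgame]
    · rintro v ⟨x, hx0, hx1, b, hbr, hv⟩
      have h0 := hx0 0
      have h1 := hx0 1
      rw [Fin.sum_univ_two] at hx1 hv
      fin_cases b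
      · norm_num [ULgame] at hv; linarith [hv]
      · norm_num [ULgame] at hv; nlinarith
      · have hm := hbr 1
        rw [Fin.sum_univ_two, Fin.sum_univ_two] at hm
        norm_num [UFgame] at hm
        norm_num [ULgame] at hv
        nlinarith
  · refine ⟨2, fun m b hb => ?_⟩
    set t : ℕ := ⌊(m : ℝ) * ε⌋₊ with ht
    have hεm : (0:ℝ) ≤ (m:ℝ) * ε := by positivity
    have key : ∀ i : Fin (2 * m),
        (if m + t < i.val then (2:ℝ) else 0) ≤ ULgame (leadSeq m i) (b i) := by
      intro i
      obtain ⟨hmax, htie⟩ := hb i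
      have hi2m := i.isLt
      by_cases him : i.val < m
      · have hsub : (i.val - m : ℕ) = 0 := by omega
        have hmin : min i.val m = i.val := by omega
        have hb0 : b i = 0 := by
          apply htie
          intro b'
          have hc0 : cumFollower ε m i 0 = (i.val : ℝ) * ε := by
            rw [cum0, hsub, hmin]; norm_num
          rcases fin3_cases b' with h | h | h <;> subst h
          · exact le_refl _
          · rw [cum1, hsub, hmin, hc0]
            have h1 : (0:ℝ) ≤ (i.val : ℝ) := by positivity
            have h2 : (0:ℝ) ≤ (i.val : ℝ) * ε := mul_nonneg h1 hε.le
            push_cast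
            linarith
          · rw [cum2, hc0]; positivity
        rw [hb0]
        have hls : leadSeq m i = 0 := by simp [leadSeq, him]
        rw [hls]
        have hif : ¬ (m + t < i.val) := by omega
        rw [if_neg hif]
        norm_num [ULgame]
      · push_neg at him
        have hmin : min i.val m = m := by omega
        have hk : i.val - m < m := by omega
        have hls : leadSeq m i = 1 := by simp [leadSeq, Nat.not_lt.mpr him]
        have hc0 : cumFollower ε m i 0 = (m : ℝ) * ε - ((i.val - m : ℕ) : ℝ) := by
          rw [cum0, hmin]
        have hc1 : cumFollower ε m i 1 = -(m : ℝ) + ((i.val - m : ℕ) : ℝ) := by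
          rw [cum1, hmin]
        have hkm : ((i.val - m : ℕ) : ℝ) < (m : ℝ) := by exact_mod_cast hk
        by_cases hkt : m + t < i.val
        · have hmε : (m : ℝ) * ε < ((i.val - m : ℕ) : ℝ) := by
            have h1 : t < i.val - m := by omega
            have := (Nat.floor_lt hεm).mp (show ⌊(m:ℝ)*ε⌋₊ < i.val - m from h1)
            exact_mod_cast this
          have hb2 : b i = 2 := by
            have h2 := hmax 2
            rw [cum2] at h2
            rcases fin3_cases (b i) with h | h | h
            · rw [h, hc0] at h2; linarith
            · rw [h, hc1] at h2; linarith
            · exact h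
          rw [hb2, hls, if_pos hkt]
          rw [show ULgame 1 2 = 2 from rfl]
        · have hkt' : ((i.val - m : ℕ) : ℝ) ≤ (m : ℝ) * ε := by
            have h1 : i.val - m ≤ t := by omega
            calc ((i.val - m : ℕ) : ℝ) ≤ (t : ℝ) := by exact_mod_cast h1
              _ ≤ (m : ℝ) * ε := Nat.floor_le hεm
          have hb0 : b i = 0 := by
            apply htie
            intro b'
            rcases fin3_cases b' with h | h | h <;> subst h
            · exact le_refl _
            · rw [hc1, hc0]; linarith
            · rw [cum2, hc0]; linarith
          rw [hb0, hls, if_neg hkt]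
          norm_num [ULgame]
    have hsum : ∑ i : Fin (2 * m), ULgame (leadSeq m i) (b i) ≥
        ∑ i : Fin (2 * m), (if m + t < i.val then (2:ℝ) else 0) :=
      Finset.sum_le_sum fun i _ => key i
    have hsum2 : ∑ i : Fin (2 * m), (if m + t < i.val then (2:ℝ) else 0)
        = 2 * ((2 * m - (m + t + 1) : ℕ) : ℝ) := by
      rw [Fin.sum_univ_eq_sum_range (fun j => if m + t < j then (2:ℝ) else 0) (2 * m)]
      rw [← Finset.sum_filter]
      have h1 : (Finset.range (2 * m)).filter (fun j => m + t < j)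
          = Finset.Ico (m + t + 1) (2 * m) := by
        ext j; simp only [Finset.mem_filter, Finset.mem_range, Finset.mem_Ico]; omega
      rw [h1, Finset.sum_const, Nat.card_Ico]
      simp [nsmul_eq_mul, mul_comm]
    rw [ge_iff_le] at hsum ⊢
    refine le_trans ?_ (hsum2 ▸ hsum)
    rcases Nat.eq_zero_or_pos m with hm | hm
    · subst hm; norm_num
    · have htle : (t : ℝ) ≤ (m : ℝ) * ε := Nat.floor_le hεm
      have htm : t < m := by
        have hm1 : (1:ℝ) ≤ (m:ℝ) := by exact_mod_cast hm
        have h1 : (m : ℝ) * ε < (m : ℝ) := by nlinarith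
        have : (t : ℝ) < (m : ℝ) := lt_of_le_of_lt htle h1
        exact_mod_cast this
      have hcast : ((2 * m - (m + t + 1) : ℕ) : ℝ) = 2 * m - (m + t + 1) := by
        have : m + t + 1 ≤ 2 * m := by omega
        push_cast [Nat.cast_sub this]; ring
      rw [hcast]
      linarith
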